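/- Let (X, ‖·‖) be a seminormed vector space, Y ⊆ X, k a positive integer, and W ⊆ ℝ^k bounded and nonempty. Let Y_{k,W} = {∑_{i=1}^k α_i y_i : α ∈ W, y_i ∈ Y}. Then for all δ > 0 and all τ ∈ (0,1), N_{‖·‖}(Y_{k,W}, δ) ≤ N_{‖·‖₁}(W, (1−τ)δ/R_Y) · N_{‖·‖}(Y, τδ/R_W)^k, where R_Y = sup_{y∈Y} ‖y‖ and R_W = sup_{α∈W} ‖α‖₁. -/
import Mathlib


theorem stmt_10 {X : Type*} [SeminormedAddCommGroup X] [NormedSpace ℝ X]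
    (Y : Set X) (k : ℕ) (hk : 0 < k) (W : Set (Fin k → ℝ)) (hWne : W.Nonempty)
    (RY RW δ τ : ℝ) (hRY : 0 < RY) (hRW : 0 < RW)
    (hYbd : ∀ y ∈ Y, ‖y‖ ≤ RY) (hWbd : ∀ α ∈ W, ∑ i, |α i| ≤ RW)
    (hδ : 0 < δ) (hτ0 : 0 < τ) (hτ1 : τ < 1)
    (n₁ n₂ : ℕ)
    (CW : Finset (Fin k → ℝ)) (hCW : ↑CW ⊆ W) (hCWcard : CW.card ≤ n₁)
    (hCWcover : ∀ α ∈ W, ∃ β ∈ CW, ∑ i, |α i - β i| ≤ (1 - τ) * δ / RY)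
    (CY : Finset X) (hCY : ↑CY ⊆ Y) (hCYcard : CY.card ≤ n₂)
    (hCYcover : ∀ y ∈ Y, ∃ c ∈ CY, ‖y - c‖ ≤ τ * δ / RW) :
    ∃ Z : Finset X,
      ↑Z ⊆ {x : X | ∃ α ∈ W, ∃ y : Fin k → X, (∀ i, y i ∈ Y) ∧ x = ∑ i, α i • y i} ∧
      Z.card ≤ n₁ * n₂ ^ k ∧
      ∀ x ∈ {x : X | ∃ α ∈ W, ∃ y : Fin k → X, (∀ i, y i ∈ Y) ∧ x = ∑ i, α i • y i},
        ∃ z ∈ Z, ‖x - z‖ ≤ δ := by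
  classical
  refine ⟨(CW ×ˢ Fintype.piFinset (fun _ : Fin k => CY)).image
    (fun p => ∑ i, p.1 i • p.2 i), ?_, ?_, ?_⟩
  · intro z hz
    simp only [Finset.coe_image, Set.mem_image, Finset.mem_coe, Finset.mem_product,
      Fintype.mem_piFinset] at hz
    obtain ⟨⟨β, c⟩, ⟨hβ, hc⟩, rfl⟩ := hz
    exact ⟨β, hCW hβ, c, fun i => hCY (hc i), rfl⟩
  · calc (_ : Finset X).card ≤ (CW ×ˢ Fintype.piFinset (fun _ : Fin k => CY)).card :=
          Finset.card_image_le
      _ = CW.card * CY.card ^ k := by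
          rw [Finset.card_product, Fintype.card_piFinset]; simp
      _ ≤ n₁ * n₂ ^ k := Nat.mul_le_mul hCWcard (Nat.pow_le_pow_left hCYcard k)
  · rintro x ⟨α, hα, y, hy, rfl⟩
    obtain ⟨β, hβ, hβd⟩ := hCWcover α hα
    choose c hc hcd using fun i => hCYcover (y i) (hy i)
    refine ⟨∑ i, β i • c i, ?_, ?_⟩
    · exact Finset.mem_image.2 ⟨⟨β, c⟩, Finset.mem_product.2
        ⟨hβ, Fintype.mem_piFinset.2 hc⟩, rfl⟩
    · have key : ∀ i : Fin k, ‖α i • y i - β i • c i‖ ≤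
          |α i - β i| * RY + |β i| * (τ * δ / RW) := by
        intro i
        have : α i • y i - β i • c i = (α i - β i) • y i + β i • (y i - c i) := by
          rw [sub_smul, smul_sub]; abel
        rw [this]
        calc ‖(α i - β i) • y i + β i • (y i - c i)‖
            ≤ ‖(α i - β i) • y i‖ + ‖β i • (y i - c i)‖ := norm_add_le _ _
          _ = |α i - β i| * ‖y i‖ + |β i| * ‖y i - c i‖ := by
              rw [norm_smul, norm_smul, Real.norm_eq_abs, Real.norm_eq_abs]
          _ ≤ |α i - β i| * RY + |β i| * (τ * δ / RW) := by
              gcongr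
              exacts [hYbd _ (hy i), hcd i]
      calc ‖∑ i, α i • y i - ∑ i, β i • c i‖
          = ‖∑ i, (α i • y i - β i • c i)‖ := by rw [Finset.sum_sub_distrib]
        _ ≤ ∑ i, ‖α i • y i - β i • c i‖ := norm_sum_le _ _
        _ ≤ ∑ i, (|α i - β i| * RY + |β i| * (τ * δ / RW)) :=
            Finset.sum_le_sum fun i _ => key i
        _ = (∑ i, |α i - β i|) * RY + (∑ i, |β i|) * (τ * δ / RW) := by
            rw [Finset.sum_add_distrib, Finset.sum_mul, Finset.sum_mul]
        _ ≤ ((1 - τ) * δ / RY) * RY + RW * (τ * δ / RW) := by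
            have h1 : (∑ i, |α i - β i|) * RY ≤ ((1 - τ) * δ / RY) * RY :=
              mul_le_mul_of_nonneg_right hβd hRY.le
            have h2 : (∑ i, |β i|) * (τ * δ / RW) ≤ RW * (τ * δ / RW) :=
              mul_le_mul_of_nonneg_right (hWbd β (hCW hβ)) (by positivity)
            linarith
        _ = δ := by field_simp; ring
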